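/- Let X be a standard Borel G-space with a U-separated cross-section Y, let Δ ⊆ G, and suppose there is an open neighbourhood W ⊆ U of 0 with (Ξ_Y − Δ) ∩ W = {0}. Then for every Borel set V₀ ⊆ G with V₀ − V₀ ⊆ W, every Borel set B ⊆ Y, and all g₁,…,g_r ∈ Δ: V₀.(B ∩ ⋂_{k=1}^r (−g_k).B) = (V₀.B) ∩ ⋂_{k=1}^r (−g_k).(V₀.B). -/

import Mathlib

open scoped Pointwise
open Set

/-- Action-set identity for separated cross-sections: if `Y` is a `U`-separated cross-section of a
Borel `G`-space `X`, `Δ ⊆ G`, and `W ⊆ U` is an open neighbourhood of `0` with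
`(Ξ_Y - Δ) ∩ W = {0}`, then for every `V₀` with `V₀ - V₀ ⊆ W`, every `B ⊆ Y`, and all
`g₁, …, g_r ∈ Δ`:
`V₀.(B ∩ ⋂ₖ (-gₖ).B) = (V₀.B) ∩ ⋂ₖ (-gₖ).(V₀.B)`. -/
theorem stmt9 {G X : Type*} [AddCommGroup G] [TopologicalSpace G] [IsTopologicalAddGroup G]
    [LocallyCompactSpace G] [SecondCountableTopology G]
    [MeasurableSpace G] [BorelSpace G] [MeasurableSpace X] [AddAction G X]
    (U : Set G) (hUo : IsOpen U) (hU0 : (0 : G) ∈ U)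
    (Y : Set X) (hY : MeasurableSet Y)
    (hcross : ∀ x : X, ∃ g : G, ∃ y ∈ Y, x = g +ᵥ y)
    (hsep : {g : G | ∃ y ∈ Y, g +ᵥ y ∈ Y} ∩ U = {0})
    (Δ : Set G) (W : Set G) (hWo : IsOpen W) (hW0 : (0 : G) ∈ W) (hWU : W ⊆ U)
    (hWsep : ({g : G | ∃ y ∈ Y, g +ᵥ y ∈ Y} - Δ) ∩ W = {0})
    (V₀ : Set G) (hV₀ : MeasurableSet V₀) (hV₀W : V₀ - V₀ ⊆ W)
    (B : Set X) (hB : MeasurableSet B) (hBY : B ⊆ Y)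
    (r : ℕ) (g : Fin r → G) (hg : ∀ k, g k ∈ Δ) :
    V₀ +ᵥ (B ∩ ⋂ k, (-(g k)) +ᵥ B) =
      (V₀ +ᵥ B) ∩ ⋂ k, (-(g k)) +ᵥ (V₀ +ᵥ B) := by
  ext x
  simp only [mem_inter_iff, mem_iInter, Set.mem_vadd,
    Set.mem_vadd_set_iff_neg_vadd_mem, neg_neg]
  constructor
  · rintro ⟨v, hv, b, ⟨hb, hb2⟩, rfl⟩
    refine ⟨⟨v, hv, b, hb, rfl⟩, fun k => ⟨v, hv, g k +ᵥ b, hb2 k, ?_⟩⟩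
    rw [← add_vadd, add_comm, add_vadd]
  · rintro ⟨⟨v, hv, b, hb, rfl⟩, h2⟩
    refine ⟨v, hv, b, ⟨hb, fun k => ?_⟩, rfl⟩
    obtain ⟨vk, hvk, bk, hbk, heq⟩ := h2 k
    have hbkb : bk = (g k + v - vk) +ᵥ b := by
      have : (-vk) +ᵥ (vk +ᵥ bk) = (-vk) +ᵥ (g k +ᵥ (v +ᵥ b)) := by rw [heq]
      simpa [← add_vadd, show -vk + vk = 0 by abel, show -vk + (g k + v) = g k + v - vk by abel]
        using this
    have hXi : v - vk + g k ∈ {h : G | ∃ y ∈ Y, h +ᵥ y ∈ Y} := by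
      refine ⟨b, hBY hb, ?_⟩
      have : (v - vk + g k) +ᵥ b = bk := by
        rw [hbkb]
        congr 1
        abel
      rw [this]; exact hBY hbk
    have hmem : v - vk ∈ ({h : G | ∃ y ∈ Y, h +ᵥ y ∈ Y} - Δ) ∩ W := by
      refine ⟨Set.mem_sub.2 ⟨v - vk + g k, hXi, g k, hg k, by abel⟩,
        hV₀W (Set.sub_mem_sub hv hvk)⟩
    have hv0 : v - vk = 0 := by rw [hWsep] at hmem; exact hmem
    have hvvk : v = vk := by
      have := sub_eq_zero.mp hv0; exact this
    have : bk = g k +ᵥ b := by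
      rw [hbkb, ← hvvk]
      congr 1
      abel
    rw [← this]; exact hbk
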